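/- Let α > 0, ξ > 0 with α ≠ ξ. If (y, z) : ℝ → ℝ² is a differentiable solution of the reduced problem ẏ = e^z − 1, ż = ξ + e^z(αz − ξy − ξ) that is periodic with some period T > 0, then (y, z) is constant and equal to (0, 0). In particular, for α ≠ ξ the reduced problem has no limit cycles. -/

import Mathlib

/-- For `α ≠ ξ` the reduced problem `ẏ = e^z − 1`, `ż = ξ + e^z(αz − ξy − ξ)` has
no limit cycles: every globally defined periodic solution is the constant
equilibrium `(0,0)`. -/
theorem stmt_3 (α ξ : ℝ) (hα : 0 < α) (hξ : 0 < ξ) (hne : α ≠ ξ)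
    (y z : ℝ → ℝ)
    (hy : ∀ t : ℝ, HasDerivAt y (Real.exp (z t) - 1) t)
    (hz : ∀ t : ℝ, HasDerivAt z (ξ + Real.exp (z t) * (α * z t - ξ * y t - ξ)) t)
    (T : ℝ) (hT : 0 < T)
    (hper : ∀ t : ℝ, y (t + T) = y t ∧ z (t + T) = z t) :
    ∀ t : ℝ, y t = 0 ∧ z t = 0 := by
  have hc0 : α - ξ ≠ 0 := sub_ne_zero.mpr hne
  -- Lyapunov function divided by (α - ξ)
  set k : ℝ → ℝ := fun s =>
    (-ξ * Real.exp (-ξ * y s) * (y s - z s + 1 - Real.exp (-(z s))) + 1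
      - Real.exp (-ξ * y s)) / (α - ξ) with hkdef
  have hkderiv : ∀ t : ℝ,
      HasDerivAt k (ξ * Real.exp (-ξ * y t) * ((Real.exp (z t) - 1) * z t)) t := by
    intro t
    have hG : HasDerivAt (fun s => Real.exp (-ξ * y s))
        (Real.exp (-ξ * y t) * (-ξ * (Real.exp (z t) - 1))) t :=
      ((hy t).const_mul (-ξ)).exp
    have hF : HasDerivAt (fun s => Real.exp (-(z s)))
        (Real.exp (-(z t)) * -(ξ + Real.exp (z t) * (α * z t - ξ * y t - ξ))) t :=
      (hz t).neg.exp
    have hinner : HasDerivAt (fun s => y s - z s + 1 - Real.exp (-(z s)))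
        ((Real.exp (z t) - 1) - (ξ + Real.exp (z t) * (α * z t - ξ * y t - ξ))
          - Real.exp (-(z t)) * -(ξ + Real.exp (z t) * (α * z t - ξ * y t - ξ))) t :=
      (((hy t).sub (hz t)).add_const 1).sub hF
    have hA : HasDerivAt (fun s => -ξ * Real.exp (-ξ * y s) *
          (y s - z s + 1 - Real.exp (-(z s))))
        ((-ξ * (Real.exp (-ξ * y t) * (-ξ * (Real.exp (z t) - 1)))) *
            (y t - z t + 1 - Real.exp (-(z t)))
          + (-ξ * Real.exp (-ξ * y t)) *
            ((Real.exp (z t) - 1) - (ξ + Real.exp (z t) * (α * z t - ξ * y t - ξ))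
              - Real.exp (-(z t)) * -(ξ + Real.exp (z t) * (α * z t - ξ * y t - ξ)))) t := by
      have := (hG.const_mul (-ξ)).mul hinner
      simpa [mul_assoc, Pi.mul_def] using this
    have hfull := ((hA.add_const 1).sub hG).div_const (α - ξ)
    have heq : ((-ξ * (Real.exp (-ξ * y t) * (-ξ * (Real.exp (z t) - 1)))) *
            (y t - z t + 1 - Real.exp (-(z t)))
          + (-ξ * Real.exp (-ξ * y t)) *
            ((Real.exp (z t) - 1) - (ξ + Real.exp (z t) * (α * z t - ξ * y t - ξ))
              - Real.exp (-(z t)) * -(ξ + Real.exp (z t) * (α * z t - ξ * y t - ξ)))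
          - Real.exp (-ξ * y t) * (-ξ * (Real.exp (z t) - 1))) / (α - ξ)
        = ξ * Real.exp (-ξ * y t) * ((Real.exp (z t) - 1) * z t) := by
      rw [Real.exp_neg (z t)]
      have hE : Real.exp (z t) ≠ 0 := Real.exp_ne_zero _
      field_simp
      ring
    rw [heq] at hfull
    exact hfull
  -- nonnegativity of the derivative of k
  have hknn : ∀ t : ℝ, 0 ≤ ξ * Real.exp (-ξ * y t) * ((Real.exp (z t) - 1) * z t) := by
    intro t
    have hGpos : 0 < Real.exp (-ξ * y t) := Real.exp_pos _
    have hprod : 0 ≤ (Real.exp (z t) - 1) * z t := by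
      rcases le_or_gt 0 (z t) with h | h
      · have : 1 ≤ Real.exp (z t) := Real.one_le_exp h
        exact mul_nonneg (by linarith) h
      · have : Real.exp (z t) < 1 := by
          calc Real.exp (z t) < Real.exp 0 := Real.exp_lt_exp.mpr h
          _ = 1 := Real.exp_zero
        nlinarith
    positivity
  -- k is monotone
  have hmono : Monotone k := by
    have hdiff : Differentiable ℝ k := fun t => (hkderiv t).differentiableAt
    exact monotone_of_deriv_nonneg hdiff (fun t => by
      rw [(hkderiv t).deriv]; exact hknn t)
  -- k is periodic
  have hkper : ∀ t : ℝ, k (t + T) = k t := by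
    intro t
    simp only [hkdef, (hper t).1, (hper t).2]
  -- hence k is locally constant, so its derivative vanishes, so z ≡ 0
  have hz0 : ∀ t : ℝ, z t = 0 := by
    intro t
    have hends : k (t - T) = k (t + T) := by
      have h1 : k ((t - T) + T) = k (t - T) := hkper (t - T)
      have h2 : k (t + T) = k t := hkper t
      rw [h2, ← h1]; ring_nf
    have hev : k =ᶠ[nhds t] fun _ => k (t - T) := by
      have hmem : Set.Ioo (t - T) (t + T) ∈ nhds t :=
        Ioo_mem_nhds (by linarith) (by linarith)
      filter_upwards [hmem] with s hs
      have h1 : k (t - T) ≤ k s := hmono hs.1.le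
      have h2 : k s ≤ k (t + T) := hmono hs.2.le
      rw [← hends] at h2
      exact le_antisymm h2 h1
    have hzero : HasDerivAt k 0 t :=
      (hasDerivAt_const t (k (t - T))).congr_of_eventuallyEq hev
    have huniq := (hkderiv t).unique hzero
    have hGpos : 0 < ξ * Real.exp (-ξ * y t) := by positivity
    have hprod : (Real.exp (z t) - 1) * z t = 0 := by
      rcases mul_eq_zero.mp huniq with h | h
      · exact absurd h (ne_of_gt hGpos)
      · exact h
    by_contra hzt
    rcases lt_or_gt_of_ne hzt with h | h
    · have : Real.exp (z t) < 1 := by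
        calc Real.exp (z t) < Real.exp 0 := Real.exp_lt_exp.mpr h
        _ = 1 := Real.exp_zero
      nlinarith
    · have : 1 < Real.exp (z t) := by
        calc (1 : ℝ) = Real.exp 0 := Real.exp_zero.symm
        _ < Real.exp (z t) := Real.exp_lt_exp.mpr h
      nlinarith
  -- from z ≡ 0 conclude y ≡ 0
  intro t
  refine ⟨?_, hz0 t⟩
  have hzfun : z = fun _ => (0 : ℝ) := funext hz0
  have hzero : HasDerivAt z 0 t := by
    rw [hzfun]; exact hasDerivAt_const t 0
  have := (hz t).unique hzero
  rw [hz0 t] at this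
  simp [Real.exp_zero] at this
  exact this.resolve_left (ne_of_gt hξ)
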